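/- In the scalar LQR setting with |f| > 1, c > 0, r > 0, b ≠ 0, the fixed point v* of the scalar Riccati map v ↦ c + f²vr/(r + b²v) exists, is positive, and the resulting closed-loop coefficient f_cl = f·r/(r + b²v*) satisfies |f_cl| < 1. -/

import Mathlib

theorem scalar_lqr_stabilizes (f b c r : ℝ)
    (hf : 1 < |f|) (hc : 0 < c) (hr : 0 < r) (hb : b ≠ 0) :
    ∃ v : ℝ, 0 < v ∧ v = c + f ^ 2 * v * r / (r + b ^ 2 * v) ∧
      |f * r / (r + b ^ 2 * v)| < 1 := by
  have hb2 : 0 < b ^ 2 := by positivity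
  obtain ⟨B, hB⟩ : ∃ B : ℝ, B = r - c * b ^ 2 - f ^ 2 * r := ⟨_, rfl⟩
  subst hB
  set B : ℝ := r - c * b ^ 2 - f ^ 2 * r with hB
  obtain ⟨s, hsdef⟩ : ∃ s : ℝ, s = Real.sqrt (B ^ 2 + 4 * b ^ 2 * c * r) := ⟨_, rfl⟩
  have hDpos : 0 < B ^ 2 + 4 * b ^ 2 * c * r := by positivity
  have hs0 : 0 ≤ s := hsdef ▸ Real.sqrt_nonneg _
  have hs2 : s ^ 2 = B ^ 2 + 4 * b ^ 2 * c * r := by rw [hsdef]; exact Real.sq_sqrt hDpos.le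
  have hsB : B < s := by
    have h1 : |B| < s := by
      have h4 : 0 < 4 * b ^ 2 * c * r := by positivity
      have : Real.sqrt (B ^ 2) < Real.sqrt (B ^ 2 + 4 * b ^ 2 * c * r) := by
        apply Real.sqrt_lt_sqrt (by positivity); linarith
      rw [Real.sqrt_sq_eq_abs] at this; rw [hsdef]; exact this
    calc B ≤ |B| := le_abs_self B
    _ < s := h1
  have hv : 0 < (s - B) / (2 * b ^ 2) := div_pos (by linarith) (by positivity)
  have hden : (0:ℝ) < r + b ^ 2 * ((s - B) / (2 * b ^ 2)) := by
    have : 0 < b ^ 2 * ((s - B) / (2 * b ^ 2)) := mul_pos hb2 hv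
    linarith
  refine ⟨(s - B) / (2 * b ^ 2), hv, ?_, ?_⟩
  · have h3 : (s - B) / (2 * b ^ 2) - c =
        f ^ 2 * ((s - B) / (2 * b ^ 2)) * r / (r + b ^ 2 * ((s - B) / (2 * b ^ 2))) := by
      rw [eq_div_iff hden.ne']
      rw [hB]
      field_simp
      ring_nf
      rw [hB] at hs2
      linear_combination hs2
    linarith [h3]
  · rw [abs_div, abs_of_pos hden, div_lt_one hden, abs_mul, abs_of_pos hr]
    have hbv : b ^ 2 * ((s - B) / (2 * b ^ 2)) = (s - B) / 2 := by
      field_simp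
    rw [hbv]
    have hf2 : f ^ 2 = |f| ^ 2 := (sq_abs f).symm
    have hB' : B = r - c * b ^ 2 - f ^ 2 * r := hB
    nlinarith [hs0, hf2, sq_nonneg (|f| - 1), hb2, hc]
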